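/- arXiv:1911.13246 — 2 statements merged into one kernel-verified Lean document; each statement's English description precedes it below -/
import Mathlib

section
/- (Lions–Lax–Milgram variational existence.) Let H and V be real Hilbert spaces and j : V → H an injective bounded linear map (continuous embedding). Let B : H × V → ℝ be a bilinear map and let M > 0, c > 0 be such that |B(ψ, v)| ≤ M ‖ψ‖_H ‖v‖_V for all ψ ∈ H, v ∈ V, and B(j(v), v) ≥ c ‖j(v)‖²_H for all v ∈ V. Then for every bounded linear functional F : H → ℝ there exists ψ ∈ H such that B(ψ, v) = F(j(v)) for all v ∈ V. -/
/-- Lions–Lax–Milgram variational existence: given a continuous embedding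
`j : V → H`, a bilinear form `B` bounded on `H × V` and coercive along `j`,
every bounded linear functional `F` on `H` admits `ψ ∈ H` with
`B(ψ, v) = F(j v)` for all `v ∈ V`. -/
theorem lions_lax_milgram_existence
    {H V : Type*}
    [NormedAddCommGroup H] [InnerProductSpace ℝ H] [CompleteSpace H]
    [NormedAddCommGroup V] [InnerProductSpace ℝ V] [CompleteSpace V]
    (j : V →L[ℝ] H) (hj : Function.Injective j)
    (B : H →ₗ[ℝ] V →ₗ[ℝ] ℝ) (M c : ℝ) (hM : 0 < M) (hc : 0 < c)
    (hB_bdd : ∀ (ψ : H) (v : V), |B ψ v| ≤ M * ‖ψ‖ * ‖v‖)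
    (hB_coer : ∀ v : V, c * ‖j v‖ ^ 2 ≤ B (j v) v)
    (F : H →L[ℝ] ℝ) :
    ∃ ψ : H, ∀ v : V, B ψ v = F (j v) := by
  classical
  -- For each v, ψ ↦ B ψ v is a bounded functional; Riesz-represent it by T v.
  set T : V → H := fun v =>
    (InnerProductSpace.toDual ℝ H).symm
      ((B.flip v).mkContinuous (M * ‖v‖) (fun ψ => by
        have h := hB_bdd ψ v
        simp only [LinearMap.flip_apply, Real.norm_eq_abs]
        calc |B ψ v| ≤ M * ‖ψ‖ * ‖v‖ := h
          _ = M * ‖v‖ * ‖ψ‖ := by ring)) with hTdef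
  have hT : ∀ (v : V) (ψ : H), inner ℝ (T v) ψ = B ψ v := by
    intro v ψ
    simp [hTdef, InnerProductSpace.toDual_symm_apply]
  -- T is linear.
  have hTadd : ∀ v w : V, T (v + w) = T v + T w := by
    intro v w
    apply ext_inner_right ℝ
    intro ψ
    rw [inner_add_left, hT, hT, hT, ← (B ψ).map_add]
  have hTsmul : ∀ (a : ℝ) (v : V), T (a • v) = a • T v := by
    intro a v
    apply ext_inner_right ℝ
    intro ψ
    rw [inner_smul_left, hT, hT]
    simp [map_smul]
  set Tlin : V →ₗ[ℝ] H := { toFun := T, map_add' := hTadd, map_smul' := hTsmul }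
    with hTlin
  -- coercivity gives c‖j v‖ ≤ ‖T v‖
  have hcoer : ∀ v : V, c * ‖j v‖ ≤ ‖T v‖ := by
    intro v
    rcases eq_or_ne (j v) 0 with h0 | h0
    · simp [h0, norm_nonneg]
    · have hpos : 0 < ‖j v‖ := norm_pos_iff.mpr h0
      have h1 : c * ‖j v‖ ^ 2 ≤ inner ℝ (T v) (j v) := by
        rw [hT]; exact hB_coer v
      have h2 : (inner ℝ (T v) (j v) : ℝ) ≤ ‖T v‖ * ‖j v‖ := real_inner_le_norm _ _
      have : c * ‖j v‖ ^ 2 ≤ ‖T v‖ * ‖j v‖ := h1.trans h2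
      have := (mul_le_mul_iff_of_pos_right hpos).mp (by nlinarith)
      nlinarith
  -- T injective
  have hTinj : Function.Injective Tlin := by
    rw [injective_iff_map_eq_zero]
    intro v hv
    have : c * ‖j v‖ ≤ 0 := by
      have := hcoer v
      simp only [hTlin, LinearMap.coe_mk, AddHom.coe_mk] at hv
      rwa [hv, norm_zero] at this
    have hjv : ‖j v‖ = 0 := le_antisymm (by nlinarith [norm_nonneg (j v)]) (norm_nonneg _)
    have : j v = 0 := norm_eq_zero.mp hjv
    exact hj (by simpa using this)
  set e : V ≃ₗ[ℝ] LinearMap.range Tlin := LinearEquiv.ofInjective Tlin hTinj with he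
  -- the functional on range T
  set f₀ : LinearMap.range Tlin →ₗ[ℝ] ℝ := (F.comp j).toLinearMap.comp e.symm.toLinearMap
    with hf₀
  have hkey : ∀ x : LinearMap.range Tlin, Tlin (e.symm x) = (x : H) := by
    intro x
    have := e.apply_symm_apply x
    have h2 : ((e (e.symm x) : LinearMap.range Tlin) : H) = (x : H) := by rw [this]
    simpa [he, LinearEquiv.ofInjective_apply] using h2
  have hf₀bdd : ∀ x : LinearMap.range Tlin, ‖f₀ x‖ ≤ (‖F‖ / c) * ‖x‖ := by
    intro x
    set w := e.symm x with hw
    have hx : Tlin w = (x : H) := hkey x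
    have h1 : ‖f₀ x‖ ≤ ‖F‖ * ‖j w‖ := by
      simp only [hf₀, LinearMap.coe_comp, Function.comp_apply,
        ContinuousLinearMap.coe_coe, LinearEquiv.coe_coe, ContinuousLinearMap.comp_apply]
      exact F.le_opNorm _
    have h2 : ‖j w‖ ≤ ‖(x : H)‖ / c := by
      have := hcoer w
      rw [show T w = Tlin w from rfl, hx] at this
      rw [le_div_iff₀ hc]; linarith
    have hxn : ‖x‖ = ‖(x : H)‖ := rfl
    calc ‖f₀ x‖ ≤ ‖F‖ * ‖j w‖ := h1
      _ ≤ ‖F‖ * (‖(x : H)‖ / c) := by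
          exact mul_le_mul_of_nonneg_left h2 (norm_nonneg F)
      _ = (‖F‖ / c) * ‖x‖ := by rw [hxn]; ring
  set f : LinearMap.range Tlin →L[ℝ] ℝ := f₀.mkContinuous (‖F‖ / c) hf₀bdd with hf
  obtain ⟨g, hg, -⟩ := exists_extension_norm_eq (LinearMap.range Tlin) f
  refine ⟨(InnerProductSpace.toDual ℝ H).symm g, fun v => ?_⟩
  have h1 : B ((InnerProductSpace.toDual ℝ H).symm g) v
      = inner ℝ (T v) ((InnerProductSpace.toDual ℝ H).symm g) := (hT v _).symm
  rw [h1, real_inner_comm, InnerProductSpace.toDual_symm_apply]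
  have hmem : T v ∈ LinearMap.range Tlin := ⟨v, rfl⟩
  have h2 : g (T v) = f ⟨T v, hmem⟩ := hg ⟨T v, hmem⟩
  rw [h2]
  have h3 : f ⟨T v, hmem⟩ = F (j (e.symm ⟨T v, hmem⟩)) := rfl
  have h4 : e.symm ⟨T v, hmem⟩ = v := by
    have : e v = ⟨T v, hmem⟩ := by
      apply Subtype.ext
      simp only [he, LinearEquiv.ofInjective_apply]
      rfl
    rw [← this, e.symm_apply_apply]
  rw [h3, h4]
end

section
/- Let (Y, μ) be a σ-finite measure space, c > 0, and let g, h ∈ L²(Y, μ) be real-valued with g ≥ 0 μ-a.e. Assume that ∫ (c·g − h) w dμ ≥ 0 for every w ∈ L²(Y, μ) with w ≥ 0 μ-a.e., and that ∫ (c·g − h) g dμ = 0. Then g = (1/c) · max(h, 0) μ-a.e. -/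
open MeasureTheory

/-- The complementarity step identifying the optimal control: if `g ≥ 0`,
`∫ (c g − h) w ≥ 0` for every nonnegative `w ∈ L²`, and `∫ (c g − h) g = 0`,
then `g = (1/c) h₊` a.e. (equations (v16)–(v17a)). -/
theorem complementarity_optimal_control
    {Y : Type*} [MeasurableSpace Y] (μ : Measure Y) [SigmaFinite μ]
    (c : ℝ) (hc : 0 < c) (g h : Y → ℝ)
    (hg : MemLp g 2 μ) (hh : MemLp h 2 μ)
    (hg_nonneg : 0 ≤ᵐ[μ] g)
    (hvar : ∀ w : Y → ℝ, MemLp w 2 μ → 0 ≤ᵐ[μ] w →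
      0 ≤ ∫ y, (c * g y - h y) * w y ∂μ)
    (hcomp : ∫ y, (c * g y - h y) * g y ∂μ = 0) :
    g =ᵐ[μ] fun y => (1 / c) * max (h y) 0 := by
  set φ : Y → ℝ := fun y => c * g y - h y with hφdef
  have hφ : MemLp φ 2 μ := (hg.const_mul c).sub hh
  -- Step 1: φ ≥ 0 a.e.
  have hw : MemLp (fun y => max (-(φ y)) 0) 2 μ := hφ.neg.pos_part
  have hw_nonneg : 0 ≤ᵐ[μ] fun y => max (-(φ y)) 0 :=
    Filter.Eventually.of_forall fun y => le_max_right _ _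
  have h1 := hvar _ hw hw_nonneg
  have hkey : ∀ y, φ y * max (-(φ y)) 0 = -((max (-(φ y)) 0) ^ 2) := by
    intro y
    rcases le_or_gt 0 (φ y) with h' | h'
    · rw [max_eq_right (by linarith)]; ring
    · rw [max_eq_left (by linarith)]; ring
  have hint : Integrable (fun y => (max (-(φ y)) 0) ^ 2) μ := by
    have := hw.integrable_sq
    simpa [sq] using this
  have hsq0 : ∫ y, (max (-(φ y)) 0) ^ 2 ∂μ = 0 := by
    have h2 : 0 ≤ ∫ y, -((max (-(φ y)) 0) ^ 2) ∂μ := by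
      have h1' : 0 ≤ ∫ y, φ y * max (-(φ y)) 0 ∂μ := h1
      simpa only [hkey] using h1'
    rw [integral_neg] at h2
    have h3 : 0 ≤ ∫ y, (max (-(φ y)) 0) ^ 2 ∂μ :=
      integral_nonneg fun y => sq_nonneg _
    linarith
  have hφ_nonneg : 0 ≤ᵐ[μ] φ := by
    have := (integral_eq_zero_iff_of_nonneg
      (fun y => sq_nonneg (max (-(φ y)) 0)) hint).mp hsq0
    filter_upwards [this] with y hy
    simp only [Pi.zero_apply] at hy ⊢
    have h0 : -(φ y) ⊔ 0 = 0 := sq_eq_zero_iff.mp hy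
    have h5 : -(φ y) ≤ 0 := h0 ▸ le_max_left _ _
    linarith
  -- Step 2: φ * g = 0 a.e.
  have hprod_int : Integrable (fun y => φ y * g y) μ := by
    have hI := L2.integrable_inner (𝕜 := ℝ) (hφ.toLp φ) (hg.toLp g)
    refine hI.congr ?_
    filter_upwards [hφ.coeFn_toLp, hg.coeFn_toLp] with y hy1 hy2
    simp [hy1, hy2, RCLike.inner_apply, mul_comm]
  have hprod_nonneg : 0 ≤ᵐ[μ] fun y => φ y * g y := by
    filter_upwards [hφ_nonneg, hg_nonneg] with y h1 h2
    exact mul_nonneg h1 h2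
  have hprod0 : (fun y => φ y * g y) =ᵐ[μ] 0 := by
    refine (integral_eq_zero_iff_of_nonneg_ae hprod_nonneg hprod_int).mp ?_
    simpa using hcomp
  -- Step 3: pointwise conclusion
  filter_upwards [hφ_nonneg, hg_nonneg, hprod0] with y h1 h2 h3
  simp only [Pi.zero_apply] at h1 h2 h3
  rcases mul_eq_zero.mp h3 with h4 | h4
  · -- c * g y = h y
    have hgy : c * g y = h y := by simp only [hφdef] at h4; linarith
    have hhy : 0 ≤ h y := hgy ▸ mul_nonneg hc.le h2
    rw [max_eq_left hhy, ← hgy]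
    field_simp
  · -- g y = 0
    have hhy : h y ≤ 0 := by simp only [hφdef, h4] at h1 ⊢; linarith
    rw [h4, max_eq_right hhy]
    ring
end
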